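/- Let f be holomorphic and square-integrable on the unit disk. Then for 0 < r < 1 and any z in the disk, |f(z)|^2 ≤ (4(1-r)^{-4} / |D(z,r)|) · ∫_{D(z,r)} |f(w)|^2 dA(w), where D(z,r) is the pseudohyperbolic disk and dA is normalized area measure. -/

import Mathlib

open Complex Set MeasureTheory

def unitDisk : Set ℂ := Metric.ball 0 1

/-- Normalized Lebesgue area measure on the plane (the unit disk has measure 1). -/
noncomputable def nVol : Measure ℂ := (ENNReal.ofReal Real.pi)⁻¹ • volume

/-- The pseudohyperbolic disk. -/
def phDisk (a : ℂ) (r : ℝ) : Set ℂ :=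
  {z : ℂ | ‖z‖ < 1 ∧ ‖(a - z) / (1 - (starRingEnd ℂ) a * z)‖ < r}

open Metric
open scoped Real

-- circle average
lemma circleAvg {f : ℂ → ℂ} {U : Set ℂ} (hf : DifferentiableOn ℂ f U)
    {c : ℂ} {s : ℝ} (hs : 0 < s) (hsub : Metric.closedBall c s ⊆ U) :
    ∫ θ in (0:ℝ)..(2*π), f (circleMap c s θ) = (2*π : ℝ) • f c := by
  have hd : DiffContOnCl ℂ f (Metric.ball c s) :=
    ⟨hf.mono (Metric.ball_subset_closedBall.trans hsub),
     hf.continuousOn.mono (closure_ball_subset_closedBall.trans hsub)⟩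
  have h := hd.circleIntegral_sub_inv_smul (Metric.mem_ball_self hs)
  rw [circleIntegral] at h
  have h2 : ∀ θ : ℝ, deriv (circleMap c s) θ • (circleMap c s θ - c)⁻¹ • f (circleMap c s θ)
      = I * f (circleMap c s θ) := by
    intro θ
    have hne : circleMap 0 s θ ≠ 0 := by
      simpa using circleMap_ne_center (c := 0) (R := s) hs.ne' (θ := θ)
    rw [deriv_circleMap, circleMap_sub_center, smul_eq_mul, smul_eq_mul]
    field_simp
  simp only [h2] at h
  rw [intervalIntegral.integral_const_mul] at h
  apply mul_left_cancel₀ I_ne_zero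
  rw [h, smul_eq_mul, Complex.real_smul]
  push_cast
  ring

lemma areaMVP {f : ℂ → ℂ} {U : Set ℂ} (hf : DifferentiableOn ℂ f U)
    {c : ℂ} {δ : ℝ} (hδ : 0 < δ) (hsub : Metric.closedBall c δ ⊆ U) :
    ∫ w in Metric.ball c δ, f w = (π * δ^2 : ℝ) • f c := by
  set G : ℂ → ℂ := (Metric.ball (0:ℂ) δ).indicator (fun u => f (c + u)) with hG
  have step1 : ∫ w in Metric.ball c δ, f w = ∫ u, G u := by
    rw [← MeasureTheory.integral_indicator measurableSet_ball,
      ← integral_add_left_eq_self ((Metric.ball c δ).indicator f) c]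
    congr 1
    ext u
    by_cases h : u ∈ Metric.ball (0:ℂ) δ
    · rw [hG, Set.indicator_of_mem h, Set.indicator_of_mem]
      simpa [Metric.mem_ball, dist_eq_norm] using h
    · rw [hG, Set.indicator_of_notMem h, Set.indicator_of_notMem]
      simpa [Metric.mem_ball, dist_eq_norm] using h
  rw [step1, ← Complex.integral_comp_polarCoord_symm G]
  have hcongr : ∀ p ∈ polarCoord.target,
      p.1 • G (Complex.polarCoord.symm p)
      = (Set.Ioo (0:ℝ) δ ×ˢ Set.Ioo (-π) π).indicator
          (fun p => p.1 • f (c + Complex.polarCoord.symm p)) p := by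
    rintro ⟨s, θ⟩ hp
    rw [polarCoord_target] at hp
    obtain ⟨hs, hθ⟩ := hp
    simp only [Set.mem_Ioi] at hs
    have habs : ‖Complex.polarCoord.symm (s, θ)‖ = s := by
      rw [Complex.norm_polarCoord_symm]; exact abs_of_pos hs
    have hmem : Complex.polarCoord.symm (s, θ) ∈ Metric.ball (0:ℂ) δ ↔ s < δ := by
      rw [mem_ball_zero_iff, habs]
    by_cases hsd : s < δ
    · rw [hG, Set.indicator_of_mem (hmem.2 hsd), Set.indicator_of_mem]
      exact Set.mk_mem_prod ⟨hs, hsd⟩ hθ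
    · rw [hG, Set.indicator_of_notMem (fun h => hsd (hmem.1 h)),
        Set.indicator_of_notMem, smul_zero]
      intro hmemp
      exact hsd hmemp.1.2
  rw [setIntegral_congr_fun polarCoord.open_target.measurableSet hcongr,
    setIntegral_indicator ((measurableSet_Ioo).prod (measurableSet_Ioo))]
  have hset : polarCoord.target ∩ (Set.Ioo (0:ℝ) δ ×ˢ Set.Ioo (-π) π)
      = Set.Ioo (0:ℝ) δ ×ˢ Set.Ioo (-π) π := by
    rw [polarCoord_target]
    apply Set.inter_eq_self_of_subset_right
    exact Set.prod_mono Set.Ioo_subset_Ioi_self subset_rfl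
  rw [hset]
  -- continuity / integrability
  have hcontf : ContinuousOn f (Metric.closedBall c δ) := hf.continuousOn.mono hsub
  have hsymm_cont : Continuous (fun p : ℝ × ℝ => Complex.polarCoord.symm p) := by
    simp only [Complex.polarCoord_symm_apply]
    fun_prop
  have hmap : ∀ p ∈ Set.Icc (0:ℝ) δ ×ˢ Set.Icc (-π) π,
      c + Complex.polarCoord.symm p ∈ Metric.closedBall c δ := by
    rintro ⟨s, θ⟩ ⟨hs, _⟩
    simp only [Metric.mem_closedBall, Complex.dist_eq, add_sub_cancel_left,
      Complex.norm_polarCoord_symm]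
    rw [_root_.abs_of_nonneg hs.1]
    exact hs.2
  have hint : IntegrableOn (fun p : ℝ × ℝ => p.1 • f (c + Complex.polarCoord.symm p))
      (Set.Icc (0:ℝ) δ ×ˢ Set.Icc (-π) π) := by
    apply ContinuousOn.integrableOn_compact (isCompact_Icc.prod isCompact_Icc)
    exact (continuous_fst.continuousOn).smul
      (hcontf.comp ((continuous_const.add hsymm_cont).continuousOn) hmap)
  have hint2 : IntegrableOn (fun p : ℝ × ℝ => p.1 • f (c + Complex.polarCoord.symm p))
      (Set.Ioo (0:ℝ) δ ×ˢ Set.Ioo (-π) π) :=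
    hint.mono_set (Set.prod_mono Set.Ioo_subset_Icc_self Set.Ioo_subset_Icc_self)
  -- Fubini
  have hfub : ∫ p in Set.Ioo (0:ℝ) δ ×ˢ Set.Ioo (-π) π,
      p.1 • f (c + Complex.polarCoord.symm p)
      = ∫ s in Set.Ioo (0:ℝ) δ, ∫ θ in Set.Ioo (-π) π,
          s • f (c + Complex.polarCoord.symm (s, θ)) := by
    rw [Measure.volume_eq_prod, ← Measure.prod_restrict]
    apply MeasureTheory.integral_prod
    rw [Measure.prod_restrict, ← Measure.volume_eq_prod]
    exact hint2
  rw [hfub]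
  have hinner : ∀ s ∈ Set.Ioo (0:ℝ) δ,
      ∫ θ in Set.Ioo (-π) π, s • f (c + Complex.polarCoord.symm (s, θ))
      = (2 * π * s) • f c := by
    intro s hs
    have hcm : ∀ θ : ℝ, c + Complex.polarCoord.symm (s, θ) = circleMap c s θ := by
      intro θ
      simp [circleMap, Complex.polarCoord_symm_apply, Complex.exp_mul_I,
        ← Complex.ofReal_cos, ← Complex.ofReal_sin]
    simp only [hcm]
    rw [MeasureTheory.integral_smul]
    have hIoo : ∫ θ in Set.Ioo (-π) π, f (circleMap c s θ)
        = ∫ θ in (-π)..π, f (circleMap c s θ) := by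
      rw [intervalIntegral.integral_of_le (by linarith [Real.pi_pos]),
        integral_Ioc_eq_integral_Ioo]
    have hper : Function.Periodic (fun θ => f (circleMap c s θ)) (2*π) :=
      (periodic_circleMap c s).comp f
    have hshift := hper.intervalIntegral_add_eq (-π) 0
    rw [show -π + 2*π = π by ring, zero_add] at hshift
    rw [hIoo, hshift, circleAvg hf hs.1
      ((Metric.closedBall_subset_closedBall hs.2.le).trans hsub)]
    rw [smul_smul, mul_comm]
  rw [setIntegral_congr_fun measurableSet_Ioo hinner, _root_.integral_smul_const]
  congr 1
  have : ∫ s in Set.Ioo (0:ℝ) δ, 2 * π * s = ∫ s in (0:ℝ)..δ, 2 * π * s := by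
    rw [intervalIntegral.integral_of_le hδ.le, integral_Ioc_eq_integral_Ioo]
  rw [this, intervalIntegral.integral_const_mul]
  have hid : ∫ x in (0:ℝ)..δ, x = δ^2/2 := by
    simpa using integral_id (μ := volume) (a := (0:ℝ)) (b := δ)
  rw [hid]
  ring

lemma nVol_ball (x : ℂ) {ρ : ℝ} (hρ : 0 ≤ ρ) :
    nVol (Metric.ball x ρ) = ENNReal.ofReal (ρ^2) := by
  rw [nVol, Measure.smul_apply, Complex.volume_ball, smul_eq_mul]
  rw [show ((NNReal.pi : ENNReal)) = ENNReal.ofReal π by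
    rw [← ENNReal.ofReal_coe_nnreal]; norm_num [Real.coe_toNNReal]]
  rw [← ENNReal.ofReal_pow hρ, mul_comm, mul_assoc,
    ENNReal.mul_inv_cancel (by simp [Real.pi_pos]) (by simp), mul_one]

set_option maxHeartbeats 1000000 in
theorem stmt7 (f : ℂ → ℂ) (hf : DifferentiableOn ℂ f unitDisk)
    (hL2 : IntegrableOn (fun w => ‖f w‖ ^ 2) unitDisk nVol)
    (r : ℝ) (hr0 : 0 < r) (hr1 : r < 1) (z : ℂ) (hz : z ∈ unitDisk) :
    ‖f z‖ ^ 2 ≤ 4 * ((1 - r) ^ 4)⁻¹ / (nVol (phDisk z r)).toReal *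
      ∫ w in phDisk z r, ‖f w‖ ^ 2 ∂nVol := by
  have hπ := Real.pi_pos
  set a : ℝ := ‖z‖ with ha_def
  have ha0 : 0 ≤ a := norm_nonneg z
  have ha1 : a < 1 := by simpa [unitDisk, mem_ball_zero_iff] using hz
  have h1a : 0 < 1 - a^2 := by nlinarith
  set δ : ℝ := r * (1 - a^2) / (1 + r) with hδ_def
  set R : ℝ := r * (1 - a^2) / (1 - r) with hR_def
  have hδ : 0 < δ := div_pos (mul_pos hr0 h1a) (by linarith)
  have hR : 0 < R := by
    apply div_pos (by positivity) (by linarith)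
  have hδ1a : δ < 1 - a := by
    rw [hδ_def, div_lt_iff₀ (by linarith)]
    have hra : r * a ≤ r := mul_le_of_le_one_right hr0.le ha1.le
    nlinarith [mul_pos (sub_pos.2 ha1) (by nlinarith : (0:ℝ) < 1 - r*a)]
  -- key norm identity
  have hkey : (1 : ℂ) - (starRingEnd ℂ) z * z = ((1 - a^2 : ℝ) : ℂ) := by
    rw [mul_comm, Complex.mul_conj, Complex.normSq_eq_norm_sq, ← ha_def]
    push_cast
    ring
  -- ball z δ ⊆ phDisk z r
  have hball_sub : Metric.ball z δ ⊆ phDisk z r := by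
    intro w hw
    rw [Metric.mem_ball, dist_eq_norm] at hw
    have hd : ‖z - w‖ < δ := by rwa [norm_sub_rev]
    have hw1 : ‖w‖ < 1 := by
      calc ‖w‖ = ‖z + (w - z)‖ := by ring_nf
        _ ≤ ‖z‖ + ‖w - z‖ := norm_add_le _ _
        _ < a + δ := by linarith
        _ ≤ 1 := by linarith
    refine ⟨hw1, ?_⟩
    have hDlow : (1 - a^2) - a * ‖z - w‖ ≤ ‖1 - (starRingEnd ℂ) z * w‖ := by
      have heq : (1 : ℂ) - (starRingEnd ℂ) z * w
          = ((1:ℂ) - (starRingEnd ℂ) z * z) - (starRingEnd ℂ) z * (w - z) := by ring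
      calc (1 - a^2) - a * ‖z - w‖
          = ‖((1 - a^2 : ℝ) : ℂ)‖ - ‖(starRingEnd ℂ) z * (w - z)‖ := by
            rw [Complex.norm_real, Real.norm_eq_abs, abs_of_pos h1a, norm_mul,
              RCLike.norm_conj, norm_sub_rev]
        _ ≤ ‖((1:ℂ) - (starRingEnd ℂ) z * z) - (starRingEnd ℂ) z * (w - z)‖ := by
            rw [← hkey] at *
            exact norm_sub_norm_le _ _
        _ = ‖1 - (starRingEnd ℂ) z * w‖ := by rw [← heq]
    have hD2 : (1 - a^2) / (1 + r) < ‖1 - (starRingEnd ℂ) z * w‖ := by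
      have : a * ‖z - w‖ ≤ ‖z - w‖ := by nlinarith [norm_nonneg (z - w)]
      have hδeq : (1 - a^2) - δ = (1 - a^2) / (1 + r) := by
        rw [hδ_def]; field_simp; ring
      nlinarith
    rw [norm_div, div_lt_iff₀ (by linarith [hD2, div_pos h1a (by linarith : (0:ℝ) < 1 + r)])]
    calc ‖z - w‖ < δ := hd
      _ = r * ((1 - a^2) / (1 + r)) := by rw [hδ_def]; ring
      _ ≤ r * ‖1 - (starRingEnd ℂ) z * w‖ := by nlinarith
  -- phDisk z r ⊆ ball z R
  have hph_sub : phDisk z r ⊆ Metric.ball z R := by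
    rintro w ⟨hw1, hw2⟩
    have hne : (1 : ℂ) - (starRingEnd ℂ) z * w ≠ 0 := by
      intro h
      have : ‖(starRingEnd ℂ) z * w‖ < 1 := by
        rw [norm_mul, RCLike.norm_conj]
        nlinarith [norm_nonneg w]
      have h1 : (1 : ℂ) = (starRingEnd ℂ) z * w := by linear_combination h
      rw [← h1] at this
      simp at this
    rw [norm_div, div_lt_iff₀ (norm_pos_iff.2 hne)] at hw2
    have hDup : ‖1 - (starRingEnd ℂ) z * w‖ ≤ (1 - a^2) + ‖z - w‖ := by
      have heq : (1 : ℂ) - (starRingEnd ℂ) z * w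
          = ((1:ℂ) - (starRingEnd ℂ) z * z) - (starRingEnd ℂ) z * (w - z) := by ring
      calc ‖1 - (starRingEnd ℂ) z * w‖
          = ‖((1:ℂ) - (starRingEnd ℂ) z * z) - (starRingEnd ℂ) z * (w - z)‖ := by rw [← heq]
        _ ≤ ‖(1:ℂ) - (starRingEnd ℂ) z * z‖ + ‖(starRingEnd ℂ) z * (w - z)‖ :=
            norm_sub_le _ _
        _ ≤ (1 - a^2) + ‖z - w‖ := by
            rw [hkey, Complex.norm_real, Real.norm_eq_abs, abs_of_pos h1a, norm_mul,
              RCLike.norm_conj, norm_sub_rev]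
            nlinarith [norm_nonneg (z - w)]
    rw [Metric.mem_ball, dist_eq_norm, norm_sub_rev]
    rw [hR_def, lt_div_iff₀ (by linarith)]
    nlinarith [norm_nonneg (z - w)]
  have hph_unit : phDisk z r ⊆ unitDisk := fun w hw => by
    simpa [unitDisk, mem_ball_zero_iff] using hw.1
  -- measure bounds
  have hfin : nVol (phDisk z r) ≠ ⊤ := by
    apply ne_top_of_le_ne_top _ (measure_mono hph_sub)
    rw [nVol_ball z hR.le]
    exact ENNReal.ofReal_ne_top
  have hPle : (nVol (phDisk z r)).toReal ≤ R^2 := by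
    have := measure_mono (μ := nVol) hph_sub
    rw [nVol_ball z hR.le] at this
    have h2 := ENNReal.toReal_mono ENNReal.ofReal_ne_top this
    rwa [ENNReal.toReal_ofReal (by positivity)] at h2
  have hPpos : 0 < (nVol (phDisk z r)).toReal := by
    have := measure_mono (μ := nVol) hball_sub
    rw [nVol_ball z hδ.le] at this
    have h2 := ENNReal.toReal_mono hfin this
    rw [ENNReal.toReal_ofReal (by positivity)] at h2
    nlinarith
  -- mean value
  have hcb_sub : Metric.closedBall z δ ⊆ unitDisk := by
    intro w hw
    rw [Metric.mem_closedBall, dist_eq_norm] at hw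
    rw [unitDisk, mem_ball_zero_iff]
    calc ‖w‖ = ‖z + (w - z)‖ := by ring_nf
      _ ≤ ‖z‖ + ‖w - z‖ := norm_add_le _ _
      _ < 1 := by linarith
  have hg : DifferentiableOn ℂ (fun w => f w * f w) unitDisk := hf.mul hf
  have harea := areaMVP hg hδ hcb_sub
  have hsm : ∀ S : Set ℂ, ∫ w in S, ‖f w‖^2 ∂nVol = π⁻¹ * ∫ w in S, ‖f w‖^2 := by
    intro S
    rw [nVol, Measure.restrict_smul, MeasureTheory.integral_smul_measure,
      ENNReal.toReal_inv, ENNReal.toReal_ofReal hπ.le, smul_eq_mul]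
  set J := ∫ w in Metric.ball z δ, ‖f w‖^2 ∂nVol with hJ
  set I := ∫ w in phDisk z r, ‖f w‖^2 ∂nVol with hI
  have hmean : ‖f z‖^2 ≤ (δ^2)⁻¹ * J := by
    have h1 : ‖f z‖^2 = (π * δ^2)⁻¹ * ‖∫ w in Metric.ball z δ, f w * f w‖ := by
      rw [harea, norm_smul, Real.norm_eq_abs, abs_of_pos (mul_pos hπ (pow_pos hδ 2)), norm_mul]
      rw [← sq]
      field_simp
    have h2 : ‖∫ w in Metric.ball z δ, f w * f w‖ ≤ ∫ w in Metric.ball z δ, ‖f w‖^2 := by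
      calc ‖∫ w in Metric.ball z δ, f w * f w‖
          ≤ ∫ w in Metric.ball z δ, ‖f w * f w‖ := norm_integral_le_integral_norm _
        _ = ∫ w in Metric.ball z δ, ‖f w‖^2 := by
            congr 1; funext w; rw [norm_mul, sq]
    have h3 : ∫ w in Metric.ball z δ, ‖f w‖^2 = π * J := by
      rw [hJ, hsm]
      field_simp
    calc ‖f z‖^2 = (π * δ^2)⁻¹ * ‖∫ w in Metric.ball z δ, f w * f w‖ := h1
      _ ≤ (π * δ^2)⁻¹ * (π * J) := by
          rw [← h3]
          exact mul_le_mul_of_nonneg_left h2 (by positivity)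
      _ = (δ^2)⁻¹ * J := by field_simp
  have hJI : J ≤ I := by
    apply setIntegral_mono_set (hL2.mono_set hph_unit)
      (Filter.Eventually.of_forall fun w => by positivity)
      (HasSubset.Subset.eventuallyLE hball_sub)
  have hI0 : 0 ≤ I := integral_nonneg fun w => by positivity
  have hkey2 : (δ^2)⁻¹ ≤ 4 * ((1 - r) ^ 4)⁻¹ / (nVol (phDisk z r)).toReal := by
    rw [inv_eq_one_div, div_le_div_iff₀ (pow_pos hδ 2) hPpos, one_mul]
    have hR2 : R^2 ≤ 4 * ((1 - r) ^ 4)⁻¹ * δ^2 := by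
      have h1r : (0:ℝ) < 1 - r := by linarith
      rw [hR_def, hδ_def, div_pow, div_pow, div_le_iff₀ (pow_pos h1r 2)]
      rw [show 4 * ((1 - r) ^ 4)⁻¹ * ((r * (1 - a ^ 2)) ^ 2 / (1 + r) ^ 2) * (1 - r) ^ 2
          = 4 * (r * (1 - a ^ 2)) ^ 2 / ((1 - r) ^ 2 * (1 + r) ^ 2) by
        field_simp]
      rw [le_div_iff₀ (by positivity)]
      have h2a : (0:ℝ) ≤ 1 - r^2 := by nlinarith
      have hsq : (1-r)^2*(1+r)^2 ≤ 4 := by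
        nlinarith [mul_le_mul_of_nonneg_left (by nlinarith : 1 - r^2 ≤ 1) h2a]
      nlinarith [mul_le_mul_of_nonneg_left hsq (sq_nonneg (r*(1-a^2)))]
    linarith [hPle]
  calc ‖f z‖^2 ≤ (δ^2)⁻¹ * J := hmean
    _ ≤ (δ^2)⁻¹ * I := mul_le_mul_of_nonneg_left hJI (by positivity)
    _ ≤ 4 * ((1 - r) ^ 4)⁻¹ / (nVol (phDisk z r)).toReal * I :=
        mul_le_mul_of_nonneg_right hkey2 hI0
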